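/- If q(0,t) = ρe^{iθ} and q̄_x(0,t) = e^{-2iθ}q_x(0,t) with ρ ≠ 0, θ real, then V(λ)|_{x=0} satisfies K(λ)V(-λ)|_{x=0} = V(λ)|_{x=0}K(λ) where K(λ) = [[1, 2ie^{iθ}λρ/(ρ²-2λ²)],[2ie^{-iθ}λρ/(ρ²-2λ²), 1]]. -/

import Mathlib

set_option maxHeartbeats 1600000

open Complex Matrix

noncomputable def sigma3 : Matrix (Fin 2) (Fin 2) ℂ := !![1, 0; 0, -1]

noncomputable def Vmat (q qx l : ℂ) : Matrix (Fin 2) (Fin 2) ℂ :=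
  (-2 * I * l ^ 2) • sigma3 + (2 * l) • !![0, q; -(starRingEnd ℂ) q, 0]
    + (-I) • (!![0, qx; -(starRingEnd ℂ) qx, 0] * sigma3)
    + (-I) • (!![0, q; -(starRingEnd ℂ) q, 0] * !![0, q; -(starRingEnd ℂ) q, 0] * sigma3)

/-- The non-Robin boundary matrix of Remark 2 (Eq. (4.12)). -/
noncomputable def Kρθ (ρ θ : ℝ) (l : ℂ) : Matrix (Fin 2) (Fin 2) ℂ :=
  !![1, 2 * I * exp (I * θ) * l * ρ / (ρ ^ 2 - 2 * l ^ 2);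
     2 * I * exp (-(I * θ)) * l * ρ / (ρ ^ 2 - 2 * l ^ 2), 1]

theorem stmt6 (ρ θ : ℝ) (hρ : 0 < ρ) (q qx l : ℂ)
    (hq : q = ρ * exp (I * θ))
    (hqx : (starRingEnd ℂ) qx = exp (-(2 * I * θ)) * qx)
    (hl : 2 * l ^ 2 ≠ (ρ : ℂ) ^ 2) :
    Kρθ ρ θ l * Vmat q qx (-l) = Vmat q qx l * Kρθ ρ θ l := by
  have hE : exp (I * θ) ≠ 0 := Complex.exp_ne_zero _
  have hd : ((ρ:ℂ) ^ 2 - 2 * l ^ 2) ≠ 0 := by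
    intro h; exact hl (by linear_combination -h)
  have hcE : (starRingEnd ℂ) (exp (I * θ)) = exp (-(I * θ)) := by
    rw [← Complex.exp_conj, _root_.map_mul, Complex.conj_I, Complex.conj_ofReal]
    ring_nf
  have hcq : (starRingEnd ℂ) q = ρ * exp (-(I * θ)) := by
    rw [hq, _root_.map_mul, Complex.conj_ofReal, hcE]
  have hE2 : exp (-(2 * I * θ)) = exp (-(I*θ)) * exp (-(I*θ)) := by
    rw [← Complex.exp_add]
    congr 1; ring
  have hEinv : exp (-(I * θ)) = (exp (I * θ))⁻¹ := by
    rw [← Complex.exp_neg]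
  ext i j
  fin_cases i <;> fin_cases j <;>
    · simp [Kρθ, Vmat, sigma3, Matrix.mul_apply, Fin.sum_univ_succ, hcq, hcE, hqx, hE2, hEinv, hq]
      field_simp
      all_goals ring_nf
      try simp only [Complex.I_sq]
      try ring
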